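/- Let ξ, ν ∈ ℂ with (1 − |ν|²)·conj(ξ) − 2·conj(ν) ≠ 0, and set ξ′ = (2ν·conj(ξ) + 1 − |ν|²)/((1 − |ν|²)·conj(ξ) − 2·conj(ν)). Then u(ξ′) = u(ξ) − 2·⟨u(ξ), u(ν)⟩·u(ν); that is, the direction represented by ξ′ is the mirror reflection of the direction represented by ξ in the plane orthogonal to the unit vector u(ν). -/

import Mathlib

open Complex

noncomputable section

/-- The unit vector of `ℝ³ = ℂ × ℝ` represented, via inverse stereographic
projection from the south pole, by the direction parameter `ζ ∈ ℂ`. -/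
def dirVec (ζ : ℂ) : ℂ × ℝ :=
  (2 * ζ / (1 + Complex.normSq ζ), (1 - Complex.normSq ζ) / (1 + Complex.normSq ζ))

/-- The Euclidean inner product on `ℝ³ = ℂ × ℝ`. -/
def ip3 (v w : ℂ × ℝ) : ℝ := (v.1 * (starRingEnd ℂ) w.1).re + v.2 * w.2

set_option maxHeartbeats 2000000 in
/-- The Möbius-type map `ξ ↦ (2ν·ξ̄ + 1 − |ν|²)/((1 − |ν|²)·ξ̄ − 2ν̄)` realises, on
direction parameters, the mirror reflection of directions in the plane orthogonal
to the unit vector represented by `ν`. -/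
theorem dirVec_reflection (ξ ν : ℂ)
    (h : (1 - (Complex.normSq ν : ℂ)) * (starRingEnd ℂ) ξ - 2 * (starRingEnd ℂ) ν ≠ 0) :
    dirVec ((2 * ν * (starRingEnd ℂ) ξ + 1 - (Complex.normSq ν : ℂ)) /
        ((1 - (Complex.normSq ν : ℂ)) * (starRingEnd ℂ) ξ - 2 * (starRingEnd ℂ) ν)) =
      dirVec ξ - (2 * ip3 (dirVec ξ) (dirVec ν)) • dirVec ν := by
  set a := Complex.normSq ξ with ha
  set b := Complex.normSq ν with hb
  set R := (ξ * (starRingEnd ℂ) ν).re with hR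
  set N := 2 * ν * (starRingEnd ℂ) ξ + 1 - (b : ℂ) with hN
  set D := (1 - (b : ℂ)) * (starRingEnd ℂ) ξ - 2 * (starRingEnd ℂ) ν with hD
  have ha0 : (0:ℝ) ≤ a := Complex.normSq_nonneg ξ
  have hb0 : (0:ℝ) ≤ b := Complex.normSq_nonneg ν
  have ha1 : (0:ℝ) < 1 + a := by linarith
  have hb1 : (0:ℝ) < 1 + b := by linarith
  have hac : (ξ * (starRingEnd ℂ) ξ) = (a:ℂ) := Complex.mul_conj ξ
  have hbc : (ν * (starRingEnd ℂ) ν) = (b:ℂ) := Complex.mul_conj ν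
  have hRc : ((R:ℂ)) = (ξ * (starRingEnd ℂ) ν + (starRingEnd ℂ) ξ * ν) / 2 := by
    rw [eq_div_iff (two_ne_zero)]
    rw [show (starRingEnd ℂ) ξ * ν = (starRingEnd ℂ) (ξ * (starRingEnd ℂ) ν) by
      rw [map_mul, Complex.conj_conj]]
    rw [Complex.add_conj, hR]
    push_cast
    ring
  have hnDpos : 0 < Complex.normSq D := Complex.normSq_pos.mpr h
  have hnD : Complex.normSq D ≠ 0 := hnDpos.ne'
  have hnNf : Complex.normSq N = 4*a*b + (1-b)^2 + 4*(1-b)*R := by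
    have : ((Complex.normSq N : ℂ)) = ((4*a*b + (1-b)^2 + 4*(1-b)*R : ℝ) : ℂ) := by
      rw [← Complex.mul_conj N, hN]
      push_cast
      rw [hRc]
      simp only [map_sub, map_add, map_mul, map_one, map_ofNat, Complex.conj_conj,
        Complex.conj_ofReal]
      rw [← hac, ← hbc]
      push_cast
      ring
    exact_mod_cast this
  have hnDf : Complex.normSq D = (1-b)^2*a + 4*b - 4*(1-b)*R := by
    have : ((Complex.normSq D : ℂ)) = (((1-b)^2*a + 4*b - 4*(1-b)*R : ℝ) : ℂ) := by
      rw [← Complex.mul_conj D, hD]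
      push_cast
      rw [hRc]
      simp only [map_sub, map_add, map_mul, map_one, map_ofNat, Complex.conj_conj,
        Complex.conj_ofReal]
      rw [← hac, ← hbc]
      push_cast
      ring
    exact_mod_cast this
  have hip : ip3 (dirVec ξ) (dirVec ν) = (4*R + (1-a)*(1-b)) / ((1+a)*(1+b)) := by
    simp only [ip3, dirVec, ← ha, ← hb]
    have h1 : ((1:ℂ)+(a:ℂ)) ≠ 0 := by
      rw [show ((1:ℂ)+(a:ℂ)) = ((1+a : ℝ) : ℂ) by push_cast; ring]
      exact_mod_cast ha1.ne'
    have h2 : ((1:ℂ)+(b:ℂ)) ≠ 0 := by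
      rw [show ((1:ℂ)+(b:ℂ)) = ((1+b : ℝ) : ℂ) by push_cast; ring]
      exact_mod_cast hb1.ne'
    have e : 2*ξ/(1+(a:ℂ)) * (starRingEnd ℂ) (2*ν/(1+(b:ℂ))) =
        ((4/((1+a)*(1+b)) : ℝ) : ℂ) * (ξ * (starRingEnd ℂ) ν) := by
      simp only [map_div₀, map_mul, map_add, map_one, map_ofNat, Complex.conj_ofReal]
      push_cast
      field_simp
      ring
    rw [e, Complex.re_ofReal_mul, ← hR]
    field_simp
  have hq : Complex.normSq (N / D) = Complex.normSq N / Complex.normSq D := by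
    simp [Complex.normSq_div]
  have hsum : Complex.normSq N + Complex.normSq D = (1+a)*(1+b)^2 := by
    rw [hnNf, hnDf]; ring
  have habpos : (0:ℝ) < (1+a)*(1+b)^2 := by positivity
  have h1q : 1 + Complex.normSq (N / D) = (1+a)*(1+b)^2 / Complex.normSq D := by
    rw [hq, ← hsum]
    field_simp
    ring
  refine Prod.ext ?_ ?_
  · -- first component
    show 2 * (N / D) / (1 + (Complex.normSq (N/D) : ℂ)) =
      2 * ξ / (1 + (a:ℂ)) - (2 * ip3 (dirVec ξ) (dirVec ν)) • (2 * ν / (1 + (b:ℂ)))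
    rw [hip, Complex.real_smul]
    have h1 : ((1:ℂ)+(a:ℂ)) ≠ 0 := by
      rw [show ((1:ℂ)+(a:ℂ)) = ((1+a : ℝ) : ℂ) by push_cast; ring]
      exact_mod_cast ha1.ne'
    have h2 : ((1:ℂ)+(b:ℂ)) ≠ 0 := by
      rw [show ((1:ℂ)+(b:ℂ)) = ((1+b : ℝ) : ℂ) by push_cast; ring]
      exact_mod_cast hb1.ne'
    have hab : (((1+a)*(1+b)^2 : ℝ) : ℂ) ≠ 0 := by exact_mod_cast habpos.ne'
    have hDne : ((Complex.normSq D : ℝ) : ℂ) ≠ 0 := by exact_mod_cast hnD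
    have h3 : ((1:ℂ) + (Complex.normSq (N/D) : ℂ)) =
        (((1+a)*(1+b)^2 : ℝ) : ℂ) / ((Complex.normSq D : ℝ) : ℂ) := by
      rw [show ((1:ℂ) + (Complex.normSq (N/D) : ℂ)) = ((1 + Complex.normSq (N/D) : ℝ) : ℂ)
        by push_cast; ring, h1q]
      push_cast
      ring
    have hDC : ((Complex.normSq D : ℝ) : ℂ) = D * (starRingEnd ℂ) D :=
      (Complex.mul_conj D).symm
    have expand : 2*(N/D) / ((((1+a)*(1+b)^2 : ℝ) : ℂ) / ((Complex.normSq D : ℝ) : ℂ)) =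
        2 * N * (starRingEnd ℂ) D / (((1+a)*(1+b)^2 : ℝ) : ℂ) := by
      rw [hDC]
      field_simp
    have hRHS : 2 * ξ / (1 + (a:ℂ)) -
        ((2 * ((4*R + (1-a)*(1-b)) / ((1+a)*(1+b))) : ℝ) : ℂ) * (2 * ν / (1 + (b:ℂ))) =
        (2*ξ*(1+(b:ℂ))^2 - 4*((4*R + (1-a)*(1-b) : ℝ) : ℂ)*ν) / (((1+a)*(1+b)^2 : ℝ) : ℂ) := by
      push_cast
      field_simp
      ring
    have hnum2 : 2 * N * (starRingEnd ℂ) D =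
        2*ξ*(1+(b:ℂ))^2 - 4*((4*R + (1-a)*(1-b) : ℝ) : ℂ)*ν := by
      rw [hN, hD]
      simp only [map_sub, map_add, map_mul, map_one, map_ofNat, Complex.conj_conj,
        Complex.conj_ofReal]
      push_cast
      rw [hRc, ← hac, ← hbc]
      ring
    rw [h3, expand, hRHS, hnum2]
  · -- second component
    show (1 - Complex.normSq (N/D)) / (1 + Complex.normSq (N/D)) =
      (1-a)/(1+a) - (2 * ip3 (dirVec ξ) (dirVec ν)) * ((1-b)/(1+b))
    have hnum : 1 - Complex.normSq (N/D) = (Complex.normSq D - Complex.normSq N) /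
        Complex.normSq D := by
      rw [hq]; field_simp
    have hP : ((1-b)^2*a + 4*b - 4*(1-b)*R) ≠ 0 := by rw [← hnDf]; exact hnD
    rw [hip, hnum, h1q, hnNf, hnDf]
    rw [div_div_div_cancel_right₀ hP]
    field_simp
    ring

end
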